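/- Let G be a group and let n, i be positive integers with 1 ≤ i ≤ n. Then [γ_i(G)^{4^{n-i}}, G] ≤ N_{n+1,i+1}(G). -/

import Mathlib

/-- `H^m`: the subgroup generated by the `m`-th powers of elements of `H`. -/
def sPow {G : Type*} [Group G] (H : Subgroup G) (m : ℕ) : Subgroup G :=
  Subgroup.closure ((fun h => h ^ m) '' (H : Set G))

/-- `γ_n(G)`, the lower central series indexed so that `γ_1(G) = G`. -/
def gamma (G : Type*) [Group G] (n : ℕ) : Subgroup G :=
  (⊤ : Subgroup G).lowerCentralSeries (n - 1)

/-- `N_{n,k}(G) = γ_k(G)^{4^{n-k}} ⋯ γ_n(G)` (product of normal subgroups = join). -/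
def Nnk (G : Type*) [Group G] (n k : ℕ) : Subgroup G :=
  ⨆ i ∈ Finset.Icc k n, sPow (gamma G i) (4 ^ (n - i))

/-- The `λ̄`-series: `λ̄_1(G) = G`, `λ̄_{n+1}(G) = λ̄_n(G)^4 [λ̄_n(G), G]`. -/
def lambdaBar (G : Type*) [Group G] : ℕ → Subgroup G
  | 0 => ⊤
  | 1 => ⊤
  | (n + 2) => sPow (lambdaBar G (n + 1)) 4 ⊔ ⁅lambdaBar G (n + 1), (⊤ : Subgroup G)⁆

/-- The lower `p`-central series: `λ_1(G) = G`, `λ_{n+1}(G) = λ_n(G)^p [λ_n(G), G]`. -/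
def lowP (G : Type*) [Group G] (p : ℕ) : ℕ → Subgroup G
  | 0 => ⊤
  | 1 => ⊤
  | (n + 2) => sPow (lowP G p (n + 1)) p ⊔ ⁅lowP G p (n + 1), (⊤ : Subgroup G)⁆

/-- `Ω_i(G)`: subgroup generated by elements of order dividing `p^i`. -/
def Omega (G : Type*) [Group G] (p i : ℕ) : Subgroup G :=
  Subgroup.closure {x : G | x ^ p ^ i = 1}

/-- A finite `p`-group is `p`-central if `Ω_1(G) ≤ Z(G)` for odd `p`,
resp. `Ω_2(G) ≤ Z(G)` for `p = 2`. -/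
def IsPCentral (p : ℕ) (G : Type*) [Group G] : Prop :=
  if p = 2 then Omega G 2 2 ≤ Subgroup.center G else Omega G p 1 ≤ Subgroup.center G

instance gamma_normal (G : Type*) [Group G] (n : ℕ) : (gamma G n).Normal :=
  inferInstanceAs ((⊤ : Subgroup G).lowerCentralSeries (n - 1)).Normal

instance sPow_normal {G : Type*} [Group G] (H : Subgroup G) [hH : H.Normal] (m : ℕ) :
    (sPow H m).Normal := by
  constructor
  intro x hx g
  induction hx using Subgroup.closure_induction with
  | mem y hy =>
    obtain ⟨h, hh, rfl⟩ := hy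
    exact Subgroup.subset_closure ⟨g * h * g⁻¹, hH.conj_mem h hh g, by
      simp [conj_pow]⟩
  | one => simpa using (sPow H m).one_mem
  | mul a b _ _ ha hb =>
    have : g * (a * b) * g⁻¹ = (g * a * g⁻¹) * (g * b * g⁻¹) := by group
    rw [this]; exact (sPow H m).mul_mem ha hb
  | inv a _ ha =>
    have : g * a⁻¹ * g⁻¹ = (g * a * g⁻¹)⁻¹ := by group
    rw [this]; exact (sPow H m).inv_mem ha

theorem normal_iSup {G : Type*} [Group G] {ι : Sort*} (f : ι → Subgroup G)
    (h : ∀ i, (f i).Normal) : (⨆ i, f i).Normal := by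
  constructor
  intro x hx g
  refine Subgroup.iSup_induction f (C := fun y => g * y * g⁻¹ ∈ ⨆ i, f i) hx
    (fun i y hy => Subgroup.mem_iSup_of_mem i ((h i).conj_mem y hy g)) (by simpa using Subgroup.one_mem (⨆ i, f i)) ?_
  intro a b ha hb
  have : g * (a * b) * g⁻¹ = (g * a * g⁻¹) * (g * b * g⁻¹) := by group
  rw [this]; exact Subgroup.mul_mem _ ha hb

instance Nnk_normal (G : Type*) [Group G] (n k : ℕ) : (Nnk G n k).Normal :=
  normal_iSup _ fun i => normal_iSup _ fun _ => inferInstance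

instance lambdaBar_normal (G : Type*) [Group G] : ∀ n, (lambdaBar G n).Normal
  | 0 => inferInstanceAs (⊤ : Subgroup G).Normal
  | 1 => inferInstanceAs (⊤ : Subgroup G).Normal
  | (n + 2) => by
    haveI := lambdaBar_normal G (n + 1)
    exact inferInstanceAs
      (sPow (lambdaBar G (n + 1)) 4 ⊔ ⁅lambdaBar G (n + 1), (⊤ : Subgroup G)⁆).Normal

instance lowP_normal (G : Type*) [Group G] (p : ℕ) : ∀ n, (lowP G p n).Normal
  | 0 => inferInstanceAs (⊤ : Subgroup G).Normal
  | 1 => inferInstanceAs (⊤ : Subgroup G).Normal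
  | (n + 2) => by
    haveI := lowP_normal G p (n + 1)
    exact inferInstanceAs
      (sPow (lowP G p (n + 1)) p ⊔ ⁅lowP G p (n + 1), (⊤ : Subgroup G)⁆).Normal


open scoped commutatorElement

section AuxLemmas

variable {G : Type*} [Group G]

lemma sPow_one' (H : Subgroup G) : sPow H 1 = H := by
  unfold sPow
  simp only [pow_one, Set.image_id', Subgroup.closure_eq]

lemma pow_mem_sPow {H : Subgroup G} {a : G} (ha : a ∈ H) (m : ℕ) : a ^ m ∈ sPow H m :=
  Subgroup.subset_closure ⟨a, ha, rfl⟩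

lemma sPow_le {H K : Subgroup G} {m : ℕ} (h : ∀ a ∈ H, a ^ m ∈ K) : sPow H m ≤ K := by
  refine (Subgroup.closure_le K).mpr ?_
  rintro s ⟨a, ha, rfl⟩
  exact h a ha

lemma le_Nnk {n k j : ℕ} (h1 : k ≤ j) (h2 : j ≤ n) :
    sPow (gamma G j) (4 ^ (n - j)) ≤ Nnk G n k := by
  have hj : j ∈ Finset.Icc k n := Finset.mem_Icc.mpr ⟨h1, h2⟩
  exact le_iSup₂ (f := fun j (_ : j ∈ Finset.Icc k n) => sPow (gamma G j) (4 ^ (n - j))) j hj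

lemma Nnk_anti {n k k' : ℕ} (h : k ≤ k') : Nnk G n k' ≤ Nnk G n k := by
  refine iSup₂_le fun j hj => ?_
  obtain ⟨hj1, hj2⟩ := Finset.mem_Icc.mp hj
  exact le_Nnk (le_trans h hj1) hj2

lemma commutator_gamma_le (a : ℕ) (ha : 1 ≤ a) :
    ⁅gamma G a, (⊤ : Subgroup G)⁆ ≤ gamma G (a + 1) := by
  have h : a - 1 + 1 = a := Nat.succ_pred_eq_of_pos ha
  show ⁅(⊤ : Subgroup G).lowerCentralSeries (a - 1), ⊤⁆ ≤ (⊤ : Subgroup G).lowerCentralSeries (a + 1 - 1)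
  rw [Nat.add_sub_cancel, ← h]
  exact le_of_eq rfl

lemma commutator_closure_top_le {S : Set G} {L : Subgroup G} [hL : L.Normal]
    (h : ∀ s ∈ S, ∀ g : G, ⁅s, g⁆ ∈ L) :
    ⁅Subgroup.closure S, (⊤ : Subgroup G)⁆ ≤ L := by
  rw [Subgroup.commutator_le]
  intro a ha g _
  refine Subgroup.closure_induction (p := fun a _ => ∀ g : G, ⁅a, g⁆ ∈ L)
    (fun s hs => h s hs) ?_ ?_ ?_ ha g
  · intro g
    have h1 : ⁅(1 : G), g⁆ = 1 := by group
    rw [h1]; exact L.one_mem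
  · intro x y hx hy ihx ihy g
    have h1 : ⁅x * y, g⁆ = x * ⁅y, g⁆ * x⁻¹ * ⁅x, g⁆ := by group
    rw [h1]
    exact L.mul_mem (hL.conj_mem _ (ihy g) x) (ihx g)
  · intro x hx ihx g
    have h1 : ⁅x⁻¹, g⁆ = x⁻¹ * ⁅x, g⁆⁻¹ * x := by group
    rw [h1]
    have h2 : x⁻¹ * ⁅x, g⁆⁻¹ * x = x⁻¹ * ⁅x, g⁆⁻¹ * x⁻¹⁻¹ := by group
    rw [h2]
    exact hL.conj_mem _ (L.inv_mem (ihx g)) x⁻¹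

lemma commutator_iSup_top_le {ι : Sort*} {f : ι → Subgroup G} {L : Subgroup G} [hL : L.Normal]
    (h : ∀ j, ⁅f j, (⊤ : Subgroup G)⁆ ≤ L) :
    ⁅⨆ j, f j, (⊤ : Subgroup G)⁆ ≤ L := by
  rw [Subgroup.commutator_le]
  intro a ha g _
  refine Subgroup.iSup_induction f (C := fun a => ∀ g : G, ⁅a, g⁆ ∈ L) ha ?_ ?_ ?_ g
  · intro j x hx g
    exact Subgroup.commutator_le.mp (h j) x hx g (Subgroup.mem_top g)
  · intro g
    have h1 : ⁅(1 : G), g⁆ = 1 := by group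
    rw [h1]; exact L.one_mem
  · intro x y ihx ihy g
    have h1 : ⁅x * y, g⁆ = x * ⁅y, g⁆ * x⁻¹ * ⁅x, g⁆ := by group
    rw [h1]
    exact L.mul_mem (hL.conj_mem _ (ihy g) x) (ihx g)

lemma comm_pow_eq_one {Q : Type*} [Group Q] {y g : Q}
    (hc : Commute y ⁅y, g⁆) (h4 : ⁅y, g⁆ ^ 4 = 1) : ⁅y ^ 4, g⁆ = 1 := by
  have hyg : y * g * y⁻¹ = ⁅y, g⁆ * g := by rw [commutatorElement_def]; group
  have key : ∀ k : ℕ, y ^ k * g * (y ^ k)⁻¹ = ⁅y, g⁆ ^ k * g := by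
    intro k
    induction k with
    | zero => simp
    | succ k ih =>
      have h1 : y * ⁅y, g⁆ ^ k = ⁅y, g⁆ ^ k * y := (hc.pow_right k).eq
      calc y ^ (k + 1) * g * (y ^ (k + 1))⁻¹
          = y * (y ^ k * g * (y ^ k)⁻¹) * y⁻¹ := by rw [pow_succ']; group
        _ = y * (⁅y, g⁆ ^ k * g) * y⁻¹ := by rw [ih]
        _ = (y * ⁅y, g⁆ ^ k) * (g * y⁻¹) := by group
        _ = (⁅y, g⁆ ^ k * y) * (g * y⁻¹) := by rw [h1]
        _ = ⁅y, g⁆ ^ k * (y * g * y⁻¹) := by group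
        _ = ⁅y, g⁆ ^ k * (⁅y, g⁆ * g) := by rw [hyg]
        _ = ⁅y, g⁆ ^ (k + 1) * g := by rw [pow_succ]; group
  have h2 := key 4
  rw [h4, one_mul] at h2
  rw [commutatorElement_def, h2]
  group

end AuxLemmas

lemma key_lemma (G : Type*) [Group G] :
    ∀ e i : ℕ, 1 ≤ i →
      ⁅sPow (gamma G i) (4 ^ e), (⊤ : Subgroup G)⁆ ≤ Nnk G (i + e + 1) (i + 1) := by
  intro e
  induction e using Nat.strong_induction_on with
  | _ e IH =>
    intro i hi
    match e with
    | 0 =>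
      have h1 : gamma G (i + 1) ≤ Nnk G (i + 1) (i + 1) := by
        have h := le_Nnk (G := G) (le_refl (i + 1)) (le_refl (i + 1))
        rwa [Nat.sub_self, pow_zero, sPow_one'] at h
      calc ⁅sPow (gamma G i) (4 ^ 0), (⊤ : Subgroup G)⁆
          = ⁅gamma G i, (⊤ : Subgroup G)⁆ := by rw [pow_zero, sPow_one']
        _ ≤ gamma G (i + 1) := commutator_gamma_le i hi
        _ ≤ Nnk G (i + 0 + 1) (i + 1) := h1
    | (e' + 1) =>
      have claimA : ⁅Nnk G (i + e' + 1) (i + 1), (⊤ : Subgroup G)⁆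
          ≤ Nnk G (i + e' + 2) (i + 1) := by
        refine commutator_iSup_top_le fun j => commutator_iSup_top_le fun hj => ?_
        obtain ⟨hj1, hj2⟩ := Finset.mem_Icc.mp hj
        have h1 := IH (i + e' + 1 - j) (by omega) j (by omega)
        have h2 : j + (i + e' + 1 - j) + 1 = i + e' + 2 := by omega
        rw [h2] at h1
        exact le_trans h1 (Nnk_anti (by omega))
      have claimAA : ⁅Nnk G (i + e' + 1) (i + 1), Nnk G (i + e' + 1) (i + 1)⁆
          ≤ Nnk G (i + e' + 2) (i + 1) :=
        le_trans (Subgroup.commutator_mono le_rfl le_top) claimA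
      set D := Nnk G (i + e' + 2) (i + 1) with hD
      let π : G →* G ⧸ D := QuotientGroup.mk' D
      have hpi1 : ∀ a : G, a ∈ D → π a = 1 := fun a ha => (QuotientGroup.eq_one_iff a).mpr ha
      have hpi2 : ∀ a : G, π a = 1 → a ∈ D := fun a ha => (QuotientGroup.eq_one_iff a).mp ha
      have hcomm : ∀ x ∈ Nnk G (i + e' + 1) (i + 1), ∀ y ∈ Nnk G (i + e' + 1) (i + 1),
          Commute (π x) (π y) := by
        intro x hx y hy
        have h1 : ⁅x, y⁆ ∈ D := claimAA (Subgroup.commutator_mem_commutator hx hy)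
        have h2 : π ⁅x, y⁆ = 1 := hpi1 _ h1
        rw [map_commutatorElement] at h2
        exact commutatorElement_eq_one_iff_commute.mp h2
      have hmemA : ∀ a ∈ Nnk G (i + e' + 1) (i + 1), (π a) ^ 4 = 1 := by
        intro a ha
        have ha' : a ∈ ⨆ j, ⨆ (_ : j ∈ Finset.Icc (i + 1) (i + e' + 1)),
            sPow (gamma G j) (4 ^ (i + e' + 1 - j)) := ha
        clear ha
        induction ha' using Subgroup.iSup_induction' with
        | h1 => simp
        | hmul x y hx' hy' ihx ihy =>
          have cxy : Commute (π x) (π y) := hcomm x hx' y hy'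
          rw [map_mul, cxy.mul_pow, ihx, ihy, one_mul]
        | hp j x hx =>
          have hsub2 : (⨆ (_ : j ∈ Finset.Icc (i + 1) (i + e' + 1)),
              sPow (gamma G j) (4 ^ (i + e' + 1 - j))) ≤ Nnk G (i + e' + 1) (i + 1) :=
            le_iSup (fun j => ⨆ (_ : j ∈ Finset.Icc (i + 1) (i + e' + 1)),
              sPow (gamma G j) (4 ^ (i + e' + 1 - j))) j
          induction hx using Subgroup.iSup_induction' with
          | h1 => simp
          | hmul x y hx' hy' ihx ihy =>
            have cxy : Commute (π x) (π y) := hcomm x (hsub2 hx') y (hsub2 hy')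
            rw [map_mul, cxy.mul_pow, ihx, ihy, one_mul]
          | hp hj x hx =>
            obtain ⟨hj1, hj2⟩ := Finset.mem_Icc.mp hj
            have hsub : sPow (gamma G j) (4 ^ (i + e' + 1 - j)) ≤ Nnk G (i + e' + 1) (i + 1) :=
              le_Nnk hj1 hj2
            have hx'' : x ∈ Subgroup.closure
                ((fun h => h ^ 4 ^ (i + e' + 1 - j)) '' (gamma G j : Set G)) := hx
            clear hx
            induction hx'' using Subgroup.closure_induction with
            | one => simp
            | mul x y hx' hy' ihx ihy =>
              have cxy : Commute (π x) (π y) := hcomm x (hsub hx') y (hsub hy')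
              rw [map_mul, cxy.mul_pow, ihx, ihy, one_mul]
            | inv x hx' ihx =>
              rw [map_inv, inv_pow, ihx, inv_one]
            | mem s hs =>
              obtain ⟨h, hh, rfl⟩ := hs
              have hp : (h ^ 4 ^ (i + e' + 1 - j)) ^ 4 = h ^ 4 ^ (i + e' + 2 - j) := by
                rw [← pow_mul, ← pow_succ]
                have he : i + e' + 1 - j + 1 = i + e' + 2 - j := by omega
                rw [he]
              have hmem : (h ^ 4 ^ (i + e' + 1 - j)) ^ 4 ∈ D := by
                rw [hp, hD]
                exact le_Nnk hj1 (by omega) (pow_mem_sPow hh _)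
              rw [← map_pow]
              exact hpi1 _ hmem
      show ⁅sPow (gamma G i) (4 ^ (e' + 1)), (⊤ : Subgroup G)⁆ ≤ D
      refine commutator_closure_top_le ?_
      rintro s ⟨x, hx, rfl⟩ g
      have hyq : x ^ 4 ^ (e' + 1) = (x ^ 4 ^ e') ^ 4 := by rw [← pow_mul, ← pow_succ]
      have hd : ⁅x ^ 4 ^ e', g⁆ ∈ Nnk G (i + e' + 1) (i + 1) :=
        IH e' (by omega) i hi
          (Subgroup.commutator_mem_commutator (pow_mem_sPow hx _) (Subgroup.mem_top g))
      have hd4 : ⁅π (x ^ 4 ^ e'), π g⁆ ^ 4 = 1 := by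
        rw [← map_commutatorElement]
        exact hmemA _ hd
      have hdy : Commute (π (x ^ 4 ^ e')) ⁅π (x ^ 4 ^ e'), π g⁆ := by
        have h1 : ⁅⁅x ^ 4 ^ e', g⁆, x ^ 4 ^ e'⁆ ∈ D :=
          claimA (Subgroup.commutator_mem_commutator hd (Subgroup.mem_top _))
        have h2 := hpi1 _ h1
        rw [map_commutatorElement, map_commutatorElement] at h2
        exact (commutatorElement_eq_one_iff_commute.mp h2).symm
      refine hpi2 _ ?_
      show π ⁅x ^ 4 ^ (e' + 1), g⁆ = 1
      rw [hyq, map_commutatorElement, map_pow]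
      exact comm_pow_eq_one hdy hd4

theorem stmt_1 (G : Type*) [Group G] (n i : ℕ) (hi : 1 ≤ i) (hin : i ≤ n) :
    ⁅sPow (gamma G i) (4 ^ (n - i)), (⊤ : Subgroup G)⁆ ≤ Nnk G (n + 1) (i + 1) := by
  have h := key_lemma G (n - i) i hi
  have h2 : i + (n - i) + 1 = n + 1 := by omega
  rwa [h2] at h
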